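/- Let k ≥ 2 and r ≥ 2 be integers, let H be a k-uniform hypergraph, and let G be the complete (k+1)-uniform hypergraph on (r−1)k+1 vertices, with V(G) disjoint from V(H). Then G ⋉ H is a (k+1)-uniform hypergraph, ν(G ⋉ H) ≤ (r−1)k+1, and G ⋉ H is r-colorable if and only if H is r-colorable. -/

import Mathlib

open Finset

/-- `(V, E)` is a hypergraph: every edge is a nonempty subset of `V`. -/
def IsHypergraph {α : Type*} (V : Finset α) (E : Finset (Finset α)) : Prop :=
  ∀ e ∈ E, e ⊆ V ∧ e.Nonempty

/-- A matching: a set of pairwise disjoint edges. -/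
def IsMatching {α : Type*} (M : Finset (Finset α)) : Prop :=
  ∀ e ∈ M, ∀ f ∈ M, e ≠ f → Disjoint e f

/-- `ν(G) ≤ s`: every matching consisting of edges of `E` has at most `s` edges. -/
def MatchNumLE {α : Type*} (E : Finset (Finset α)) (s : ℕ) : Prop :=
  ∀ M ⊆ E, IsMatching M → M.card ≤ s

/-- An edge `e` is monochromatic under the coloring `c`. -/
def Mono {α : Type*} (e : Finset α) {r : ℕ} (c : α → Fin r) : Prop :=
  ∃ i, ∀ v ∈ e, c v = i

/-- `c` is a proper coloring of the hypergraph with edge set `E`: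
no edge is monochromatic. -/
def IsColoring {α : Type*} (E : Finset (Finset α)) {r : ℕ} (c : α → Fin r) : Prop :=
  ∀ e ∈ E, ¬ Mono e c

/-- The hypergraph with edge set `E` is `r`-colorable. -/
def HColorable {α : Type*} (E : Finset (Finset α)) (r : ℕ) : Prop :=
  ∃ c : α → Fin r, IsColoring E c

/-- The edge set of `G ⋉ H`: the edges of `G` together with all sets `e ∪ {x}`
for `e` an edge of `H` and `x` a vertex of `G`. -/
def ltimesEdges {α : Type*} [DecidableEq α] (VG : Finset α)
    (EG EH : Finset (Finset α)) : Finset (Finset α) :=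
  EG ∪ (EH ×ˢ VG).image (fun p => insert p.2 p.1)


private theorem ltimes_fwd {α : Type*} [DecidableEq α] (k r : ℕ)
    (hk : 2 ≤ k) (hr : 2 ≤ r)
    (VG : Finset α) (EH : Finset (Finset α))
    (hcard : VG.card = (r - 1) * k + 1)
    (c : α → Fin r)
    (hcG : ∀ e ⊆ VG, e.card = k + 1 → ¬ ∃ i, ∀ v ∈ e, c v = i)
    (hcX : ∀ f ∈ EH, ∀ x ∈ VG, ¬ ∃ i, ∀ v ∈ insert x f, c v = i) :
    ∀ e ∈ EH, ¬ ∃ i, ∀ v ∈ e, c v = i := by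
  rintro e he ⟨i, hi⟩
  have havoid : ∀ x ∈ VG, c x ≠ i := by
    intro x hx hcx
    apply hcX e he x hx
    exact ⟨i, fun v hv => by
      rcases mem_insert.mp hv with rfl | hv
      · exact hcx
      · exact hi v hv⟩
  have hmaps : ∀ x ∈ VG, c x ∈ (univ : Finset (Fin r)).erase i :=
    fun x hx => mem_erase.mpr ⟨havoid x hx, mem_univ _⟩
  have hlt : ((univ : Finset (Fin r)).erase i).card * k < VG.card := by
    rw [card_erase_of_mem (mem_univ _), card_univ, Fintype.card_fin, hcard]; omega
  obtain ⟨j, _, hj⟩ := exists_lt_card_fiber_of_mul_lt_card_of_maps_to hmaps hlt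
  obtain ⟨S, hS, hScard⟩ := exists_subset_card_eq hj
  apply hcG S (hS.trans (filter_subset _ _)) hScard
  exact ⟨j, fun v hv => (mem_filter.mp (hS hv)).2⟩

private theorem ltimes_bwd {α : Type*} [DecidableEq α] (k r : ℕ)
    (hk : 2 ≤ k) (hr : 2 ≤ r)
    (VG VH : Finset α) (EH : Finset (Finset α))
    (hH : ∀ e ∈ EH, e ⊆ VH ∧ e.Nonempty)
    (hcard : VG.card = (r - 1) * k + 1)
    (hdisj : Disjoint VG VH)
    (c : α → Fin r) (hc : ∀ e ∈ EH, ¬ ∃ i, ∀ v ∈ e, c v = i) :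
    ∃ c' : α → Fin r,
      (∀ e ⊆ VG, e.card = k + 1 → ¬ ∃ i, ∀ v ∈ e, c' v = i) ∧
      (∀ f ∈ EH, ∀ x ∈ VG, ¬ ∃ i, ∀ v ∈ insert x f, c' v = i) := by
  classical
  have hk0 : 0 < k := by omega
  have hrk : (r - 1) * k + 1 ≤ r * k := by
    have : r * k = (r-1) * k + k := by
      have h1 : r - 1 + 1 = r := by omega
      calc r * k = (r - 1 + 1) * k := by rw [h1]
        _ = (r-1)*k + k := by ring
    omega
  have hdivlt : ∀ n, n < VG.card → n / k < r := by
    intro n hn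
    rw [Nat.div_lt_iff_lt_mul hk0]
    rw [hcard] at hn
    have hcomm : k * r = r * k := mul_comm k r
    omega
  set c' : α → Fin r := fun v =>
    if h : v ∈ VG then ⟨(VG.equivFin ⟨v, h⟩).val / k, hdivlt _ (VG.equivFin ⟨v, h⟩).isLt⟩
    else c v with hc'
  refine ⟨c', ?_, ?_⟩
  · rintro e hsub hecard ⟨i, hi⟩
    have hinj : Set.InjOn (fun v => if h : v ∈ VG then (VG.equivFin ⟨v, h⟩).val % k else 0) e := by
      intro v hv w hw hvw
      have hvG := hsub hv; have hwG := hsub hw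
      simp only [dif_pos hvG, dif_pos hwG] at hvw
      have h1 := hi v hv; have h2 := hi w hw
      simp only [hc', dif_pos hvG, dif_pos hwG] at h1 h2
      have hdiv : (VG.equivFin ⟨v, hvG⟩).val / k = (VG.equivFin ⟨w, hwG⟩).val / k := by
        have := h1.trans h2.symm
        exact Fin.mk.inj_iff.mp this
      have hval : (VG.equivFin ⟨v, hvG⟩).val = (VG.equivFin ⟨w, hwG⟩).val := by
        have d1 := Nat.div_add_mod (VG.equivFin ⟨v, hvG⟩).val k
        have d2 := Nat.div_add_mod (VG.equivFin ⟨w, hwG⟩).val k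
        have d3 : k * ((VG.equivFin ⟨v, hvG⟩).val / k) = k * ((VG.equivFin ⟨w, hwG⟩).val / k) := by
          rw [hdiv]
        omega
      exact congrArg Subtype.val (VG.equivFin.injective (Fin.val_injective hval))
    have hle : e.card ≤ (range k).card := by
      apply card_le_card_of_injOn _ _ hinj
      intro v hv
      simp only [dif_pos (hsub hv), mem_coe, mem_range]
      exact Nat.mod_lt _ hk0
    rw [hecard, card_range] at hle
    omega
  · rintro f hf x hx ⟨i, hi⟩
    apply hc f hf
    refine ⟨i, fun v hv => ?_⟩
    have hvH : v ∈ VH := (hH f hf).1 hv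
    have hvG : v ∉ VG := fun h => Finset.disjoint_left.mp hdisj h hvH
    have := hi v (mem_insert_of_mem hv)
    simpa only [hc', dif_neg hvG] using this

/-- Let `H` be a `k`-uniform hypergraph and `G` the complete `(k+1)`-uniform
hypergraph on `(r-1)k + 1` vertices, with disjoint vertex sets. Then `G ⋉ H` is
`(k+1)`-uniform, `ν(G ⋉ H) ≤ (r-1)k + 1`, and `G ⋉ H` is `r`-colorable iff `H`
is `r`-colorable. -/
theorem ltimes_complete_uniform {α : Type*} [DecidableEq α] (k r : ℕ)
    (hk : 2 ≤ k) (hr : 2 ≤ r)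
    (VG VH : Finset α) (EH : Finset (Finset α))
    (hH : IsHypergraph VH EH) (hunif : ∀ e ∈ EH, e.card = k)
    (hcard : VG.card = (r - 1) * k + 1)
    (hdisj : Disjoint VG VH) :
    (∀ e ∈ ltimesEdges VG (VG.powersetCard (k + 1)) EH, e.card = k + 1) ∧
    MatchNumLE (ltimesEdges VG (VG.powersetCard (k + 1)) EH) ((r - 1) * k + 1) ∧
    (HColorable (ltimesEdges VG (VG.powersetCard (k + 1)) EH) r ↔ HColorable EH r) := by
  classical
  have hk0 : 0 < k := by omega
  have hmem : ∀ e, e ∈ ltimesEdges VG (VG.powersetCard (k + 1)) EH ↔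
      (e ⊆ VG ∧ e.card = k + 1) ∨ ∃ f ∈ EH, ∃ x ∈ VG, e = insert x f := by
    intro e
    simp only [ltimesEdges, mem_union, mem_image, mem_product, mem_powersetCard]
    constructor
    · rintro (h | ⟨⟨f, x⟩, ⟨hf, hx⟩, rfl⟩)
      · exact Or.inl h
      · exact Or.inr ⟨f, hf, x, hx, rfl⟩
    · rintro (h | ⟨f, hf, x, hx, rfl⟩)
      · exact Or.inl h
      · exact Or.inr ⟨⟨f, x⟩, ⟨hf, hx⟩, rfl⟩
  have hnotmem : ∀ f ∈ EH, ∀ x ∈ VG, x ∉ f := by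
    intro f hf x hx hxf
    exact Finset.disjoint_left.mp hdisj hx ((hH f hf).1 hxf)
  refine ⟨?_, ?_, ?_⟩
  · intro e he
    rcases (hmem e).1 he with ⟨_, hc⟩ | ⟨f, hf, x, hx, rfl⟩
    · exact hc
    · rw [card_insert_of_notMem (hnotmem f hf x hx), hunif f hf]
  · intro M hM hmatch
    have hne : ∀ e ∈ M, (e ∩ VG).Nonempty := by
      intro e he
      rcases (hmem e).1 (hM he) with ⟨hsub, hc⟩ | ⟨f, hf, x, hx, rfl⟩
      · rw [inter_eq_left.mpr hsub]
        rw [← card_pos, hc]; omega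
      · exact ⟨x, mem_inter.mpr ⟨mem_insert_self x f, hx⟩⟩
    have hVG : VG.Nonempty := by rw [← card_pos, hcard]; omega
    rw [← hcard]
    apply card_le_card_of_injOn
      (fun e => if h : (e ∩ VG).Nonempty then h.choose else hVG.choose)
    · intro e he
      simp only [hne e he, dif_pos]
      exact (mem_inter.mp (hne e he).choose_spec).2
    · intro e he f hf hef
      simp only [hne e (by simpa using he), hne f (by simpa using hf), dif_pos] at hef
      by_contra hne'
      have h1 := (mem_inter.mp (hne e (by simpa using he)).choose_spec).1
      have h2 := (mem_inter.mp (hne f (by simpa using hf)).choose_spec).1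
      rw [hef] at h1
      exact (Finset.disjoint_left.mp
        (hmatch e (by simpa using he) f (by simpa using hf) hne') h1) h2
  · constructor
    · rintro ⟨c, hc⟩
      refine ⟨c, fun e he => ?_⟩
      apply ltimes_fwd k r hk hr VG EH hcard c
      · intro e' hsub hcard' hmono
        exact hc e' ((hmem e').2 (Or.inl ⟨hsub, hcard'⟩)) hmono
      · intro f hf x hx hmono
        exact hc _ ((hmem _).2 (Or.inr ⟨f, hf, x, hx, rfl⟩)) hmono
      · exact he
    · rintro ⟨c, hc⟩
      obtain ⟨c', h1, h2⟩ := ltimes_bwd k r hk hr VG VH EH hH hcard hdisj c hc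
      refine ⟨c', fun e he => ?_⟩
      rcases (hmem e).1 he with ⟨hsub, hcard'⟩ | ⟨f, hf, x, hx, rfl⟩
      · exact h1 e hsub hcard'
      · exact h2 f hf x hx
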